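/- For even n and distinct indices j₁, j₂, j₃ (mod n), the unique coefficients with λ₁ e_{j₁} + λ₂ e_{j₂} + λ₃ e_{j₃} = u are λ₁ = 1 − cot((j₁−j₂)π/n)·cot((j₃−j₁)π/n), λ₂ = 1 − cot((j₁−j₂)π/n)·cot((j₂−j₃)π/n), λ₃ = 1 − cot((j₂−j₃)π/n)·cot((j₃−j₁)π/n), whenever the relevant cotangents are defined. -/

import Mathlib

open Real

noncomputable def rn (n : ℕ) : ℝ := Real.sqrt (1 / Real.cos (π / n))

noncomputable def ωst (n : ℕ) (i : ℤ) : Fin 3 → ℝ :=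
  ![rn n * Real.cos (2 * π * (i : ℝ) / n), rn n * Real.sin (2 * π * (i : ℝ) / n), 1]

noncomputable def eEv (n : ℕ) (j : ℤ) : Fin 3 → ℝ :=
  ![rn n * Real.cos ((2 * (j : ℝ) - 1) * π / n) / 2,
    rn n * Real.sin ((2 * (j : ℝ) - 1) * π / n) / 2, 1 / 2]

noncomputable def eOd (n : ℕ) (j : ℤ) : Fin 3 → ℝ :=
  (1 / (1 + rn n ^ 2)) •
    ![rn n * Real.cos (2 * π * (j : ℝ) / n), rn n * Real.sin (2 * π * (j : ℝ) / n), 1]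

noncomputable def ip (v w : Fin 3 → ℝ) : ℝ := v 0 * w 0 + v 1 * w 1 + v 2 * w 2

noncomputable def uE : Fin 3 → ℝ := ![0, 0, 1]

lemma ngon_aux (x a c l₁ l₂ l₃ : ℝ)
    (hsa : Real.sin a ≠ 0) (hsc : Real.sin c ≠ 0) (hS : Real.sin (a + c) ≠ 0)
    (hC : l₁ * Real.cos x + l₂ * Real.cos (x - 2*a) + l₃ * Real.cos (x + 2*c) = 0)
    (hSn : l₁ * Real.sin x + l₂ * Real.sin (x - 2*a) + l₃ * Real.sin (x + 2*c) = 0)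
    (hT : l₁ + l₂ + l₃ = 2) :
    l₁ * (Real.sin a * Real.sin c) = -Real.cos (a + c) ∧
    l₂ * (Real.sin a * Real.sin (a + c)) = Real.cos c ∧
    l₃ * (Real.sin (a + c) * Real.sin c) = Real.cos a := by
  set c₁ := Real.cos x with hc1
  set s₁ := Real.sin x with hs1
  set c₂ := Real.cos (x - 2*a) with hc2
  set s₂ := Real.sin (x - 2*a) with hs2
  set c₃ := Real.cos (x + 2*c) with hc3
  set s₃ := Real.sin (x + 2*c) with hs3
  have d1 : Real.sin (-(2*a)) = s₂ * c₁ - c₂ * s₁ := by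
    rw [show -(2*a) = (x - 2*a) - x by ring, Real.sin_sub]
  have d2 : Real.sin (-(2*c)) = s₁ * c₃ - c₁ * s₃ := by
    rw [show -(2*c) = x - (x + 2*c) by ring, Real.sin_sub]
  have d3 : Real.sin (2*(a+c)) = s₃ * c₂ - c₃ * s₂ := by
    rw [show 2*(a+c) = (x + 2*c) - (x - 2*a) by ring, Real.sin_sub]
  have hI : Real.sin (2*(a+c)) - Real.sin (2*a) - Real.sin (2*c)
      = -4 * Real.sin a * Real.sin c * Real.sin (a+c) := by
    rw [Real.sin_two_mul, Real.sin_two_mul, Real.sin_two_mul, Real.sin_add, Real.cos_add]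
    linear_combination (2*Real.sin a*Real.cos a) * Real.sin_sq_add_cos_sq c
      + (2*Real.sin c*Real.cos c) * Real.sin_sq_add_cos_sq a
  have h2S : Real.sin (2*(a+c)) = 2 * Real.sin (a+c) * Real.cos (a+c) := Real.sin_two_mul _
  have k1 : l₁ * (Real.sin (-(2*a)) + Real.sin (-(2*c)) + Real.sin (2*(a+c)))
      = 2 * Real.sin (2*(a+c)) := by
    linear_combination (s₂ - s₃) * hC + (c₃ - c₂) * hSn + (c₂*s₃ - c₃*s₂) * hT
      + l₁ * d1 + l₁ * d2 + (l₁ - 2) * d3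
  have k2 : l₂ * (Real.sin (-(2*a)) + Real.sin (-(2*c)) + Real.sin (2*(a+c)))
      = 2 * Real.sin (-(2*c)) := by
    linear_combination (s₃ - s₁) * hC + (c₁ - c₃) * hSn + (c₃*s₁ - c₁*s₃) * hT
      + l₂ * d1 + (l₂ - 2) * d2 + l₂ * d3
  have k3 : l₃ * (Real.sin (-(2*a)) + Real.sin (-(2*c)) + Real.sin (2*(a+c)))
      = 2 * Real.sin (-(2*a)) := by
    linear_combination (s₁ - s₂) * hC + (c₂ - c₁) * hSn + (c₁*s₂ - c₂*s₁) * hT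
      + (l₃ - 2) * d1 + l₃ * d2 + l₃ * d3
  rw [Real.sin_neg, Real.sin_neg] at k1 k2 k3
  have key1 : l₁ * (-4 * Real.sin a * Real.sin c * Real.sin (a+c))
      = 4 * Real.sin (a+c) * Real.cos (a+c) := by
    linear_combination k1 - l₁ * hI + 2 * h2S
  have key2 : l₂ * (-4 * Real.sin a * Real.sin c * Real.sin (a+c))
      = -4 * Real.sin c * Real.cos c := by
    linear_combination k2 - l₂ * hI - 2 * Real.sin_two_mul c
  have key3 : l₃ * (-4 * Real.sin a * Real.sin c * Real.sin (a+c))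
      = -4 * Real.sin a * Real.cos a := by
    linear_combination k3 - l₃ * hI - 2 * Real.sin_two_mul a
  refine ⟨?_, ?_, ?_⟩
  · have h4 : (-4 * Real.sin (a+c)) ≠ 0 := by simp [hS]
    apply mul_left_cancel₀ h4
    linear_combination key1
  · have h4 : (-4 * Real.sin c) ≠ 0 := by simp [hsc]
    apply mul_left_cancel₀ h4
    linear_combination key2
  · have h4 : (-4 * Real.sin a) ≠ 0 := by simp [hsa]
    apply mul_left_cancel₀ h4
    linear_combination key3

theorem ngon_even_three_effect_measurement_coeffs (n : ℕ) (hn : Even n) (h0 : 0 < n)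
    (j₁ j₂ j₃ : ℤ) (h12 : ¬ j₁ ≡ j₂ [ZMOD (n : ℤ)]) (h13 : ¬ j₁ ≡ j₃ [ZMOD (n : ℤ)])
    (h23 : ¬ j₂ ≡ j₃ [ZMOD (n : ℤ)])
    (hs12 : Real.sin (((j₁ : ℝ) - j₂) * π / n) ≠ 0)
    (hs23 : Real.sin (((j₂ : ℝ) - j₃) * π / n) ≠ 0)
    (hs31 : Real.sin (((j₃ : ℝ) - j₁) * π / n) ≠ 0)
    (l₁ l₂ l₃ : ℝ)
    (hu : l₁ • eEv n j₁ + l₂ • eEv n j₂ + l₃ • eEv n j₃ = uE) :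
    l₁ = 1 - Real.cot (((j₁ : ℝ) - j₂) * π / n) * Real.cot (((j₃ : ℝ) - j₁) * π / n) ∧
    l₂ = 1 - Real.cot (((j₁ : ℝ) - j₂) * π / n) * Real.cot (((j₂ : ℝ) - j₃) * π / n) ∧
    l₃ = 1 - Real.cot (((j₂ : ℝ) - j₃) * π / n) * Real.cot (((j₃ : ℝ) - j₁) * π / n) := by
  -- n ≥ 4
  have hn2 : n ≠ 2 := by
    rintro rfl
    simp only [Int.ModEq] at h12 h13 h23
    omega
  have hn4 : 4 ≤ n := by
    obtain ⟨k, hk⟩ := hn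
    omega
  have hπ := Real.pi_pos
  have hnR : (4:ℝ) ≤ (n:ℝ) := by exact_mod_cast hn4
  have hcos : 0 < Real.cos (π / n) := by
    apply Real.cos_pos_of_mem_Ioo
    constructor
    · have : 0 < π / (n:ℝ) := by positivity
      linarith
    · have h1 : π / (n:ℝ) ≤ π / 4 := by gcongr
      linarith
  have hrn : rn n / 2 ≠ 0 := by
    have : 0 < rn n := Real.sqrt_pos.mpr (one_div_pos.mpr hcos)
    positivity
  -- extract the three scalar equations
  have E0 := congrFun hu 0
  have E1 := congrFun hu 1
  have E2 := congrFun hu 2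
  simp only [eEv, uE, Pi.add_apply, Pi.smul_apply, smul_eq_mul, Matrix.cons_val_zero,
    Matrix.cons_val_one, Matrix.head_cons, Matrix.cons_val_two, Matrix.tail_cons] at E0 E1 E2
  have hT : l₁ + l₂ + l₃ = 2 := by linarith
  have hC : l₁ * Real.cos ((2*(j₁:ℝ)-1)*π/n) + l₂ * Real.cos ((2*(j₂:ℝ)-1)*π/n)
      + l₃ * Real.cos ((2*(j₃:ℝ)-1)*π/n) = 0 := by
    apply mul_left_cancel₀ hrn
    linear_combination E0
  have hS : l₁ * Real.sin ((2*(j₁:ℝ)-1)*π/n) + l₂ * Real.sin ((2*(j₂:ℝ)-1)*π/n)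
      + l₃ * Real.sin ((2*(j₃:ℝ)-1)*π/n) = 0 := by
    apply mul_left_cancel₀ hrn
    linear_combination E1
  set A := ((j₁ : ℝ) - j₂) * π / n with hA
  set B := ((j₂ : ℝ) - j₃) * π / n with hB
  set Cg := ((j₃ : ℝ) - j₁) * π / n with hCg
  have e2 : (2*(j₂:ℝ)-1)*π/n = (2*(j₁:ℝ)-1)*π/n - 2*A := by rw [hA]; ring
  have e3 : (2*(j₃:ℝ)-1)*π/n = (2*(j₁:ℝ)-1)*π/n + 2*Cg := by rw [hCg]; ring
  rw [e2, e3] at hC hS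
  have hBeq : B = -(A + Cg) := by rw [hA, hB, hCg]; ring
  have hsac : Real.sin (A + Cg) ≠ 0 := by
    intro h
    apply hs23
    rw [hBeq, Real.sin_neg, h, neg_zero]
  obtain ⟨r1, r2, r3⟩ := ngon_aux _ A Cg l₁ l₂ l₃ hs12 hs31 hsac hC hS hT
  have hccC : Real.cos Cg = Real.cos (A+Cg) * Real.cos A + Real.sin (A+Cg) * Real.sin A := by
    have h := Real.cos_sub (A+Cg) A
    rw [show A + Cg - A = Cg by ring] at h
    exact h
  have hccA : Real.cos A = Real.cos (A+Cg) * Real.cos Cg + Real.sin (A+Cg) * Real.sin Cg := by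
    have h := Real.cos_sub (A+Cg) Cg
    rw [show A + Cg - Cg = A by ring] at h
    exact h
  refine ⟨?_, ?_, ?_⟩
  · rw [Real.cot_eq_cos_div_sin, Real.cot_eq_cos_div_sin]
    field_simp
    linear_combination r1 - Real.cos_add A Cg
  · rw [hBeq, Real.cot_eq_cos_div_sin, Real.cot_eq_cos_div_sin, Real.cos_neg, Real.sin_neg]
    field_simp
    linear_combination r2 + hccC
  · rw [hBeq, Real.cot_eq_cos_div_sin, Real.cot_eq_cos_div_sin, Real.cos_neg, Real.sin_neg]
    field_simp
    linear_combination r3 + hccA
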